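/- For every x̄, p̄ ∈ ℝ^n, if (λ₁, w₁) and (λ₂, w₂) are both classical solutions of the supercritical cell problem at (x̄, p̄), then λ₁ = λ₂. -/

import Mathlib

open Matrix MeasureTheory Set

noncomputable section

/-- Euclidean norm of a vector in `ℝ^k`. -/
def en {k : ℕ} (v : Fin k → ℝ) : ℝ := Real.sqrt (v ⬝ᵥ v)

/-- Squared Euclidean norm. -/
def sq2 {k : ℕ} (v : Fin k → ℝ) : ℝ := v ⬝ᵥ v

/-- Partial derivative in the `i`-th coordinate direction. -/
def pd {m : ℕ} (w : (Fin m → ℝ) → ℝ) (i : Fin m) (y : Fin m → ℝ) : ℝ :=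
  fderiv ℝ w y (Pi.single i 1)

/-- Gradient. -/
def vgrad {m : ℕ} (w : (Fin m → ℝ) → ℝ) (y : Fin m → ℝ) : Fin m → ℝ := fun i => pd w i y

/-- Hessian matrix. -/
def vhess {m : ℕ} (w : (Fin m → ℝ) → ℝ) (y : Fin m → ℝ) : Matrix (Fin m) (Fin m) ℝ :=
  Matrix.of fun i j => pd (pd w j) i y

/-- `ℤ^m`-periodicity. -/
def ZPer {m : ℕ} (w : (Fin m → ℝ) → ℝ) : Prop :=
  ∀ (y : Fin m → ℝ) (k : Fin m → ℤ), w (y + fun i => (k i : ℝ)) = w y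

/-- Standing hypotheses on the data. -/
structure StandingHyp {n m r : ℕ}
    (σ : (Fin n → ℝ) → (Fin m → ℝ) → Matrix (Fin n) (Fin r) ℝ)
    (b : (Fin m → ℝ) → Fin m → ℝ)
    (τ : (Fin m → ℝ) → Matrix (Fin m) (Fin r) ℝ) : Prop where
  σ_bdd : ∃ C : ℝ, ∀ x y i j, |σ x y i j| ≤ C
  σ_lip : ∃ L : ℝ, ∀ x x' y y' i j, |σ x y i j - σ x' y' i j| ≤ L * (en (x - x') + en (y - y'))
  σ_per : ∀ x y (k : Fin m → ℤ), σ x (y + fun l => (k l : ℝ)) = σ x y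
  b_lip : ∃ L : ℝ, ∀ y y' i, |b y i - b y' i| ≤ L * en (y - y')
  b_per : ∀ y (k : Fin m → ℤ), b (y + fun l => (k l : ℝ)) = b y
  τ_lip : ∃ L : ℝ, ∀ y y' i j, |τ y i j - τ y' i j| ≤ L * en (y - y')
  τ_per : ∀ y (k : Fin m → ℤ), τ (y + fun l => (k l : ℝ)) = τ y
  τ_nondeg : ∃ θ : ℝ, 0 < θ ∧ ∀ y ξ, θ * sq2 ξ ≤ sq2 ((τ y)ᵀ *ᵥ ξ)

/-- Classical solution of the critical cell problem at `(x, p)`. -/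
def IsCriticalSol {n m r : ℕ}
    (σ : (Fin n → ℝ) → (Fin m → ℝ) → Matrix (Fin n) (Fin r) ℝ)
    (b : (Fin m → ℝ) → Fin m → ℝ)
    (τ : (Fin m → ℝ) → Matrix (Fin m) (Fin r) ℝ)
    (x p : Fin n → ℝ) (lam : ℝ) (w : (Fin m → ℝ) → ℝ) : Prop :=
  ContDiff ℝ 2 w ∧ ZPer w ∧
    ∀ y, lam = sq2 ((σ x y)ᵀ *ᵥ p)
        + 2 * ((τ y *ᵥ ((σ x y)ᵀ *ᵥ p)) ⬝ᵥ vgrad w y)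
        + b y ⬝ᵥ vgrad w y
        + sq2 ((τ y)ᵀ *ᵥ vgrad w y)
        + Matrix.trace (τ y * (τ y)ᵀ * vhess w y)

/-- Classical solution of the supercritical cell problem at `(x, p)`. -/
def IsSupercriticalSol {n m r : ℕ}
    (σ : (Fin n → ℝ) → (Fin m → ℝ) → Matrix (Fin n) (Fin r) ℝ)
    (b : (Fin m → ℝ) → Fin m → ℝ)
    (τ : (Fin m → ℝ) → Matrix (Fin m) (Fin r) ℝ)
    (x p : Fin n → ℝ) (lam : ℝ) (w : (Fin m → ℝ) → ℝ) : Prop :=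
  ContDiff ℝ 2 w ∧ ZPer w ∧
    ∀ y, lam = sq2 ((σ x y)ᵀ *ᵥ p) + b y ⬝ᵥ vgrad w y
        + Matrix.trace (τ y * (τ y)ᵀ * vhess w y)

/-- Classical solution of the subcritical cell problem at `(x, p)`. -/
def IsSubcriticalSol {n m r : ℕ}
    (σ : (Fin n → ℝ) → (Fin m → ℝ) → Matrix (Fin n) (Fin r) ℝ)
    (τ : (Fin m → ℝ) → Matrix (Fin m) (Fin r) ℝ)
    (x p : Fin n → ℝ) (lam : ℝ) (w : (Fin m → ℝ) → ℝ) : Prop :=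
  ContDiff ℝ 1 w ∧ ZPer w ∧
    ∀ y, lam = sq2 ((τ y)ᵀ *ᵥ vgrad w y + (σ x y)ᵀ *ᵥ p)



section Aux

open Filter

private theorem oneD_aux (g g' : ℝ → ℝ) (c : ℝ) (hmax : ∀ t, g t ≤ g 0)
    (hg : ∀ t, HasDerivAt g (g' t) t) (hg' : HasDerivAt g' c 0) (h0 : g' 0 = 0) : c ≤ 0 := by
  by_contra hc
  push_neg at hc
  have hs : Tendsto (slope g' 0) (nhdsWithin 0 {0}ᶜ) (nhds c) :=
    hasDerivAt_iff_tendsto_slope.mp hg'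
  have hev : ∀ᶠ x in nhdsWithin 0 {0}ᶜ, 0 < slope g' 0 x :=
    hs.eventually (eventually_gt_nhds hc)
  have hev2 : ∀ᶠ x in nhdsWithin 0 (Set.Ioi 0), 0 < slope g' 0 x :=
    hev.filter_mono (nhdsWithin_mono _ (by intro x hx; exact ne_of_gt hx))
  obtain ⟨u, hu, hsub⟩ := mem_nhdsGT_iff_exists_Ioo_subset.mp hev2
  have hu0 : (0:ℝ) < u := hu
  have hpos : ∀ x ∈ Set.Ioo (0:ℝ) u, 0 < g' x := by
    intro x hx
    have h2 := hsub hx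
    simp only [Set.mem_setOf_eq, slope, h0, vsub_eq_sub, sub_zero, smul_eq_mul] at h2
    have h3 := mul_pos hx.1 h2
    rwa [mul_inv_cancel_left₀ (ne_of_gt hx.1)] at h3
  have hcont : Continuous g := by
    have : Differentiable ℝ g := fun t => (hg t).differentiableAt
    exact this.continuous
  have hmono : StrictMonoOn g (Set.Icc 0 (u/2)) := by
    refine strictMonoOn_of_deriv_pos (convex_Icc _ _) hcont.continuousOn ?_
    intro x hx
    rw [interior_Icc] at hx
    rw [(hg x).deriv]
    exact hpos x ⟨hx.1, by linarith [hx.2]⟩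
  have := hmono (Set.left_mem_Icc.mpr (by linarith)) ⟨by linarith, le_refl _⟩ (by linarith)
  linarith [hmax (u/2)]

private theorem clm_expand_aux {m : ℕ} (L : (Fin m → ℝ) →L[ℝ] ℝ) (v : Fin m → ℝ) :
    L v = ∑ k, v k * L (Pi.single k 1) := by
  conv_lhs => rw [← Finset.univ_sum_single v]
  rw [map_sum]
  congr 1; ext k
  have : Pi.single k (v k) = v k • (Pi.single k 1 : Fin m → ℝ) := by
    ext j; by_cases h : j = k <;> simp [Pi.single_apply, h]
  rw [this, _root_.map_smul]; rfl

private theorem pd_contDiff_aux {m : ℕ} (u : (Fin m → ℝ) → ℝ) (hu : ContDiff ℝ 2 u) (k : Fin m) :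
    ContDiff ℝ 1 (pd u k) := by
  have h1 : ContDiff ℝ 1 (fderiv ℝ u) := hu.fderiv_right (by norm_num)
  exact h1.clm_apply contDiff_const

private theorem maxpt_aux {m : ℕ} (u : (Fin m → ℝ) → ℝ) (hu : ContDiff ℝ 2 u)
    (y₀ : Fin m → ℝ) (hmax : ∀ y, u y ≤ u y₀) :
    (∀ i, pd u i y₀ = 0) ∧
    ∀ v : Fin m → ℝ, (∑ k, v k * ∑ i, v i * vhess u y₀ i k) ≤ 0 := by
  have hdu : Differentiable ℝ u := hu.differentiable (by norm_num)
  have hgrad0 : fderiv ℝ u y₀ = 0 := by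
    have : IsLocalMax u y₀ := Filter.Eventually.of_forall hmax
    exact this.fderiv_eq_zero
  have hp0 : ∀ i, pd u i y₀ = 0 := by intro i; simp [pd, hgrad0]
  refine ⟨hp0, fun v => ?_⟩
  set ℓ : ℝ → (Fin m → ℝ) := fun t => y₀ + t • v with hℓ
  have hℓd : ∀ t, HasDerivAt ℓ v t := by
    intro t
    simpa [hℓ] using ((hasDerivAt_id t).smul_const v).const_add y₀
  have hℓ0 : ℓ 0 = y₀ := by simp [hℓ]
  set g : ℝ → ℝ := fun t => u (ℓ t) with hgdef
  set g' : ℝ → ℝ := fun t => ∑ k, v k * pd u k (ℓ t) with hg'def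
  have hpk : ∀ k, ContDiff ℝ 1 (pd u k) := pd_contDiff_aux u hu
  have hgder : ∀ t, HasDerivAt g (g' t) t := by
    intro t
    have h1 : HasDerivAt g ((fderiv ℝ u (ℓ t)) v) t :=
      (hdu (ℓ t)).hasFDerivAt.comp_hasDerivAt t (hℓd t)
    have : (fderiv ℝ u (ℓ t)) v = g' t := clm_expand_aux _ v
    rwa [this] at h1
  have hg'der : HasDerivAt g' (∑ k, v k * ∑ i, v i * vhess u y₀ i k) 0 := by
    have : ∀ k : Fin m, HasDerivAt (fun t => v k * pd u k (ℓ t))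
        (v k * ∑ i, v i * vhess u y₀ i k) 0 := by
      intro k
      have hd : HasDerivAt (fun t => pd u k (ℓ t)) ((fderiv ℝ (pd u k) y₀) v) 0 := by
        have := (((hpk k).differentiable (by norm_num)) (ℓ 0)).hasFDerivAt.comp_hasDerivAt 0 (hℓd 0)
        rwa [hℓ0] at this
      have he : (fderiv ℝ (pd u k) y₀) v = ∑ i, v i * vhess u y₀ i k := by
        rw [clm_expand_aux]; rfl
      rw [he] at hd
      exact hd.const_mul _
    exact HasDerivAt.fun_sum (fun k _ => this k)
  have hgmax : ∀ t, g t ≤ g 0 := by intro t; rw [hgdef]; simp only [hℓ0]; exact hmax _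
  have hg'0 : g' 0 = 0 := by simp [hg'def, hℓ0, hp0]
  exact oneD_aux g g' _ hgmax hgder hg'der hg'0

private theorem exists_glob_max_aux {m : ℕ} (u : (Fin m → ℝ) → ℝ) (hc : Continuous u)
    (hper : ZPer u) : ∃ y₀, ∀ y, u y ≤ u y₀ := by
  obtain ⟨y₀, -, hy₀⟩ := (isCompact_Icc (a := (0 : Fin m → ℝ)) (b := 1)).exists_isMaxOn
    ⟨0, left_mem_Icc.mpr (by intro i; norm_num)⟩ hc.continuousOn
  refine ⟨y₀, fun y => ?_⟩
  have hz : (fun i => Int.fract (y i)) ∈ Icc (0 : Fin m → ℝ) 1 := by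
    constructor <;> intro i
    · exact Int.fract_nonneg _
    · exact le_of_lt (Int.fract_lt_one _)
  have := hper (fun i => Int.fract (y i)) (fun i => ⌊y i⌋)
  have hy : ((fun i => Int.fract (y i)) + fun i => ((⌊y i⌋ : ℤ) : ℝ)) = y := by
    funext i; simp [Int.fract_add_floor]
  rw [hy] at this
  rw [this]
  exact hy₀ hz

private theorem trace_rearrange_aux {m r : ℕ} (τ : Matrix (Fin m) (Fin r) ℝ)
    (H : Matrix (Fin m) (Fin m) ℝ) :
    Matrix.trace (τ * τᵀ * H) = ∑ j : Fin r, ∑ k, τ k j * ∑ i, τ i j * H i k := by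
  simp only [Matrix.trace, Matrix.diag, Matrix.mul_apply, Matrix.transpose_apply,
    Finset.mul_sum, Finset.sum_mul]
  have h1 : ∑ x : Fin m, ∑ x1 : Fin m, ∑ i : Fin r, τ x i * τ x1 i * H x1 x
      = ∑ x : Fin m, ∑ i : Fin r, ∑ x1 : Fin m, τ x i * τ x1 i * H x1 x :=
    Finset.sum_congr rfl (fun x _ => Finset.sum_comm)
  rw [h1, Finset.sum_comm]
  refine Finset.sum_congr rfl fun j _ => ?_
  refine Finset.sum_congr rfl fun k _ => ?_
  refine Finset.sum_congr rfl fun i _ => ?_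
  ring

private theorem key_aux {m r : ℕ} (b : (Fin m → ℝ) → Fin m → ℝ)
    (τ : (Fin m → ℝ) → Matrix (Fin m) (Fin r) ℝ)
    (u : (Fin m → ℝ) → ℝ) (c : ℝ) (hu : ContDiff ℝ 2 u) (hper : ZPer u)
    (heq : ∀ y, c = b y ⬝ᵥ vgrad u y + Matrix.trace (τ y * (τ y)ᵀ * vhess u y)) : c ≤ 0 := by
  obtain ⟨y₀, hy₀⟩ := exists_glob_max_aux u hu.continuous hper
  obtain ⟨hp0, hq⟩ := maxpt_aux u hu y₀ hy₀
  have hg0 : vgrad u y₀ = 0 := by funext i; exact hp0 i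
  have htr : Matrix.trace (τ y₀ * (τ y₀)ᵀ * vhess u y₀) ≤ 0 := by
    rw [trace_rearrange_aux]
    exact Finset.sum_nonpos fun j _ => hq (fun i => τ y₀ i j)
  have := heq y₀
  rw [hg0] at this
  simp only [dotProduct_zero] at this
  linarith

private theorem pd_sub_aux {m : ℕ} (f g : (Fin m → ℝ) → ℝ)
    (hf : Differentiable ℝ f) (hg : Differentiable ℝ g) (i : Fin m) (y : Fin m → ℝ) :
    pd (fun y => f y - g y) i y = pd f i y - pd g i y := by
  simp only [pd]
  rw [fderiv_fun_sub (hf y) (hg y)]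
  rfl

private theorem stmt8_half {n m r : ℕ}
    (σ : (Fin n → ℝ) → (Fin m → ℝ) → Matrix (Fin n) (Fin r) ℝ)
    (b : (Fin m → ℝ) → Fin m → ℝ)
    (τ : (Fin m → ℝ) → Matrix (Fin m) (Fin r) ℝ)
    (xbar pbar : Fin n → ℝ)
    (lam₁ lam₂ : ℝ) (w₁ w₂ : (Fin m → ℝ) → ℝ)
    (h₁ : IsSupercriticalSol σ b τ xbar pbar lam₁ w₁)
    (h₂ : IsSupercriticalSol σ b τ xbar pbar lam₂ w₂) :
    lam₁ ≤ lam₂ := by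
  obtain ⟨hc₁, hper₁, heq₁⟩ := h₁
  obtain ⟨hc₂, hper₂, heq₂⟩ := h₂
  set u : (Fin m → ℝ) → ℝ := fun y => w₁ y - w₂ y with hudef
  have hu : ContDiff ℝ 2 u := hc₁.sub hc₂
  have hd₁ : Differentiable ℝ w₁ := hc₁.differentiable (by norm_num)
  have hd₂ : Differentiable ℝ w₂ := hc₂.differentiable (by norm_num)
  have hper : ZPer u := by
    intro y k
    simp only [hudef, hper₁ y k, hper₂ y k]
  have hgradu : ∀ y, vgrad u y = vgrad w₁ y - vgrad w₂ y := by
    intro y; funext i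
    exact pd_sub_aux w₁ w₂ hd₁ hd₂ i y
  have hpdu : ∀ j, pd u j = fun y => pd w₁ j y - pd w₂ j y := by
    intro j; funext y
    exact pd_sub_aux w₁ w₂ hd₁ hd₂ j y
  have hhessu : ∀ y, vhess u y = vhess w₁ y - vhess w₂ y := by
    intro y
    ext i j
    show pd (pd u j) i y = pd (pd w₁ j) i y - pd (pd w₂ j) i y
    rw [hpdu j]
    exact pd_sub_aux (pd w₁ j) (pd w₂ j)
      ((pd_contDiff_aux w₁ hc₁ j).differentiable (by norm_num))
      ((pd_contDiff_aux w₂ hc₂ j).differentiable (by norm_num)) i y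
  have heq : ∀ y, lam₁ - lam₂ = b y ⬝ᵥ vgrad u y
      + Matrix.trace (τ y * (τ y)ᵀ * vhess u y) := by
    intro y
    rw [hgradu y, hhessu y, Matrix.mul_sub, Matrix.trace_sub, dotProduct_sub,
      heq₁ y, heq₂ y]
    ring
  have := key_aux b τ u (lam₁ - lam₂) hu hper heq
  linarith

end Aux

/-- uniqueness of the additive eigenvalue in the supercritical cell
problem. -/
theorem stmt8 {n m r : ℕ}
    (σ : (Fin n → ℝ) → (Fin m → ℝ) → Matrix (Fin n) (Fin r) ℝ)
    (b : (Fin m → ℝ) → Fin m → ℝ)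
    (τ : (Fin m → ℝ) → Matrix (Fin m) (Fin r) ℝ)
    (hyp : StandingHyp σ b τ)
    (xbar pbar : Fin n → ℝ)
    (lam₁ lam₂ : ℝ) (w₁ w₂ : (Fin m → ℝ) → ℝ)
    (h₁ : IsSupercriticalSol σ b τ xbar pbar lam₁ w₁)
    (h₂ : IsSupercriticalSol σ b τ xbar pbar lam₂ w₂) :
    lam₁ = lam₂ :=
  le_antisymm (stmt8_half σ b τ xbar pbar lam₁ lam₂ w₁ w₂ h₁ h₂)
    (stmt8_half σ b τ xbar pbar lam₂ lam₁ w₂ w₁ h₂ h₁)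

end
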